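/- Let H be a cover of ℝ by closed sets with |H| < cov(M), where cov(M) is the least number of meager sets covering ℝ. Then H has a countable subfamily that still covers ℝ. -/

import Mathlib

open Cardinal Set Classical
noncomputable section StmtAux
namespace Stmt17


def pt (a b : ℝ) (m : ℕ) : ℝ := b - (b - a) / 2 ^ m

lemma pt_zero (a b : ℝ) : pt a b 0 = a := by simp [pt]

lemma pt_succ_sub (a b : ℝ) (m : ℕ) :
    pt a b (m + 1) - pt a b m = (b - a) / 2 ^ (m + 1) := by
  have h2 : (2:ℝ) ^ m ≠ 0 := by positivity
  simp only [pt]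
  ring

lemma pt_lt_succ {a b : ℝ} (h : a < b) (m : ℕ) : pt a b m < pt a b (m + 1) := by
  have := pt_succ_sub a b m
  have hp : (0:ℝ) < (b - a) / 2 ^ (m + 1) := by
    apply div_pos (by linarith) (by positivity)
  linarith

lemma pt_mono {a b : ℝ} (h : a < b) : StrictMono (pt a b) :=
  strictMono_nat_of_lt_succ (pt_lt_succ h)

lemma pt_le_of_le {a b : ℝ} (h : a ≤ b) {m m' : ℕ} (hm : m ≤ m') :
    pt a b m ≤ pt a b m' := by
  have h1 : (b - a) / 2 ^ m' ≤ (b - a) / 2 ^ m := by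
    apply div_le_div_of_nonneg_left (by linarith) (by positivity)
    exact pow_le_pow_right₀ (by norm_num) hm
  simp only [pt]; linarith

lemma ge_pt (a b : ℝ) (m : ℕ) (h : a ≤ b) : a ≤ pt a b m := by
  have h1 : (b - a) / 2 ^ m ≤ b - a := by
    apply div_le_self (by linarith)
    exact one_le_pow₀ (by norm_num)
  simp only [pt]; linarith

lemma pt_lt_b {a b : ℝ} (h : a < b) (m : ℕ) : pt a b m < b := by
  have : (0:ℝ) < (b - a) / 2 ^ m := div_pos (by linarith) (by positivity)
  simp only [pt]; linarith

lemma pt_tendsto {a b : ℝ} (h : a < b) {y : ℝ} (hy : y < b) : ∃ m, y < pt a b m := by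
  have hba : (0:ℝ) < b - a := by linarith
  obtain ⟨m, hm⟩ := exists_pow_lt_of_lt_one (div_pos (by linarith : (0:ℝ) < b - y) hba)
    (by norm_num : (1:ℝ)/2 < 1)
  refine ⟨m, ?_⟩
  have h1 : ((1:ℝ)/2) ^ m = 1 / 2 ^ m := by rw [div_pow, one_pow]
  rw [h1] at hm
  have hm' : 1 / 2 ^ m * (b - a) < b - y := by
    have := (div_lt_div_iff_of_pos_right hba).2 hm
    calc 1 / 2 ^ m * (b - a) = (b - y) / (b - a) * (b - a) - ((b - y)/(b-a) - 1/2^m) * (b-a) := by ring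
    _ < b - y := by
        have hpos : (0:ℝ) < ((b - y)/(b-a) - 1/2^m) * (b-a) := by
          apply mul_pos (by linarith) hba
        have : (b - y) / (b - a) * (b - a) = b - y := div_mul_cancel₀ _ (by linarith)
        linarith
  have h2 : (2:ℝ) ^ m ≠ 0 := by positivity
  have : (b - a) / 2 ^ m < b - y := by
    rw [div_eq_mul_inv, mul_comm]
    rw [div_eq_mul_inv] at hm'
    linarith [hm']
  simp only [pt]; linarith



variable (P : Set ℝ)

/-- closed ball of `P` around a rational center with rational radius -/
def ballP (q r : ℚ) : Set ℝ := P ∩ Metric.closedBall (q : ℝ) (r : ℝ)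

def KInv (K : Set ℝ) : Prop :=
  K ⊆ P ∧ IsCompact K ∧ ∃ O : Set ℝ, IsOpen O ∧ (O ∩ P).Nonempty ∧ O ∩ P ⊆ K

lemma ballP_isCompact (hP : IsClosed P) (q r : ℚ) : IsCompact (ballP P q r) :=
  (isCompact_closedBall _ _).inter_left hP

lemma kinv_ballP (hP : IsClosed P) (q r : ℚ) (h : ∃ y ∈ P, |y - (q : ℝ)| < (r : ℝ)) :
    KInv P (ballP P q r) := by
  refine ⟨inter_subset_left, ballP_isCompact P hP q r,
    Metric.ball (q : ℝ) (r : ℝ), Metric.isOpen_ball, ?_, ?_⟩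
  · obtain ⟨y, hyP, hy⟩ := h
    exact ⟨y, by simpa [Metric.mem_ball, Real.dist_eq] using hy, hyP⟩
  · intro y hy
    exact ⟨hy.2, Metric.ball_subset_closedBall hy.1⟩

def idxq (m : ℕ) : ℚ := (Denumerable.ofNat (ℚ × ℚ) m).1
def idxr (m : ℕ) : ℚ := (Denumerable.ofNat (ℚ × ℚ) m).2

def childK (K : Set ℝ) (m : ℕ) : Set ℝ :=
  if (0 : ℚ) < idxr m ∧ ballP P (idxq m) (idxr m) ⊆ K ∧
      (∃ y ∈ P, |y - (idxq m : ℝ)| < (idxr m : ℝ))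
    then ballP P (idxq m) (idxr m) else K

lemma childK_subset (K : Set ℝ) (m : ℕ) : childK P K m ⊆ K := by
  unfold childK
  split
  · next h => exact h.2.1
  · exact subset_rfl

lemma kinv_childK (hP : IsClosed P) {K : Set ℝ} (hK : KInv P K) (m : ℕ) :
    KInv P (childK P K m) := by
  unfold childK
  split
  · next h => exact kinv_ballP P hP _ _ h.2.2
  · exact hK

/-- the good child avoiding a closed `P`-nowhere-dense set -/
lemma exists_good_childK (hP : IsClosed P) {K : Set ℝ} (hK : KInv P K)
    {s : Set ℝ} (hs : IsClosed s)
    (hnwd : ∀ O : Set ℝ, IsOpen O → (O ∩ P).Nonempty → ∃ x ∈ O ∩ P, x ∉ s) :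
    ∃ m, childK P K m ∩ s = ∅ := by
  obtain ⟨-, -, O, hO, hOP, hOK⟩ := hK
  obtain ⟨x, hxOP, hxs⟩ := hnwd O hO hOP
  have hopen : IsOpen (O ∩ sᶜ) := hO.inter hs.isOpen_compl
  have hxmem : x ∈ O ∩ sᶜ := ⟨hxOP.1, hxs⟩
  obtain ⟨ε, hε, hball⟩ := Metric.isOpen_iff.1 hopen x hxmem
  obtain ⟨q, hq⟩ := exists_rat_near x (by positivity : (0:ℝ) < ε/4)
  obtain ⟨r, hr1, hr2⟩ := exists_rat_btwn (by linarith : (ε/4 : ℝ) < ε/2)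
  have hrpos : (0:ℚ) < r := by
    have : (0:ℝ) < (r:ℝ) := lt_trans (by positivity) hr1
    exact_mod_cast this
  have hsub : ballP P q r ⊆ (O ∩ sᶜ) ∩ P := by
    rintro y ⟨hyP, hyb⟩
    have : |y - (q:ℝ)| ≤ (r:ℝ) := by simpa [Real.dist_eq] using hyb
    have hyx : |y - x| < ε := by
      have h1 : |x - (q:ℝ)| < ε/4 := hq
      have : |y - x| ≤ |y - (q:ℝ)| + |(q:ℝ) - x| := abs_sub_le _ _ _
      have h2 : |(q:ℝ) - x| = |x - (q:ℝ)| := abs_sub_comm _ _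
      nlinarith [abs_nonneg (y - x), hr2]
    exact ⟨hball (by simpa [Metric.mem_ball, Real.dist_eq] using hyx), hyP⟩
  have hwit : ∃ y ∈ P, |y - (q:ℝ)| < (r:ℝ) := by
    refine ⟨x, hxOP.2, ?_⟩
    have h2 : |x - (q:ℝ)| < ε/4 := hq
    linarith
  have hKsub : ballP P q r ⊆ K := fun y hy => hOK ⟨(hsub hy).1.1, (hsub hy).2⟩
  obtain ⟨m, hm⟩ : ∃ m, Denumerable.ofNat (ℚ × ℚ) m = (q, r) :=
    ⟨_, Denumerable.ofNat_encode _⟩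
  have hq' : idxq m = q := by show (Denumerable.ofNat (ℚ × ℚ) m).1 = q; rw [hm]
  have hr' : idxr m = r := by show (Denumerable.ofNat (ℚ × ℚ) m).2 = r; rw [hm]
  refine ⟨m, ?_⟩
  unfold childK
  rw [hq', hr', if_pos ⟨hrpos, hKsub, hwit⟩]
  apply eq_empty_iff_forall_notMem.2
  rintro y ⟨hyb, hys⟩
  exact (hsub hyb).1.2 hys



def zint (m : ℕ) : ℝ := ((Denumerable.ofNat ℤ m : ℤ) : ℝ)

def childJ : Option (ℝ × ℝ) → ℕ → Option (ℝ × ℝ)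
  | none, m => some (zint m, zint m + 1)
  | some (a, b), m => some (pt a b m, pt a b (m + 1))

def Jset : Option (ℝ × ℝ) → Set ℝ
  | none => Set.univ
  | some (a, b) => Set.Ioo a b

lemma zint_add_one_le {m m' : ℕ} (h : zint m < zint m') : zint m + 1 ≤ zint m' := by
  unfold zint at h ⊢
  exact_mod_cast Int.add_one_le_of_lt (by exact_mod_cast h)

lemma zint_injective : Function.Injective zint := by
  intro m m' h
  unfold zint at h
  have h2 : (Denumerable.ofNat ℤ m : ℤ) = Denumerable.ofNat ℤ m' := by exact_mod_cast h
  have := congrArg Encodable.encode h2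
  rwa [Denumerable.encode_ofNat, Denumerable.encode_ofNat] at this

lemma childJ_disjoint (o : Option (ℝ × ℝ)) {m m' : ℕ} (hmm : m ≠ m') :
    Jset (childJ o m) ∩ Jset (childJ o m') = ∅ := by
  apply eq_empty_iff_forall_notMem.2
  rintro x ⟨hx1, hx2⟩
  match o with
  | none =>
      simp only [childJ, Jset] at hx1 hx2
      have hz : zint m ≠ zint m' := fun h => hmm (zint_injective h)
      rcases lt_or_gt_of_ne hz with h | h
      · have := zint_add_one_le h
        have := hx1.2; have := hx2.1; linarith
      · have := zint_add_one_le h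
        have := hx1.1; have := hx2.2; linarith
  | some (a, b) =>
      simp only [childJ, Jset] at hx1 hx2
      rcases le_or_gt b a with hba | hab
      · have h1 := pt_le_of_le (le_refl b) (Nat.le_succ m)
        have : pt a b (m+1) ≤ pt a b m := by
          have hd := pt_succ_sub a b m
          have : (b - a) / 2 ^ (m+1) ≤ 0 :=
            div_nonpos_of_nonpos_of_nonneg (by linarith) (by positivity)
          linarith
        have := hx1.1; have := hx1.2; linarith
      · rcases lt_or_gt_of_ne hmm with h | h
        · have : pt a b (m+1) ≤ pt a b m' := (pt_mono hab).monotone h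
          have := hx1.2; have := hx2.1; linarith
        · have : pt a b (m'+1) ≤ pt a b m := (pt_mono hab).monotone h
          have := hx1.1; have := hx2.2; linarith

lemma childJ_subset (o : Option (ℝ × ℝ)) (m : ℕ) : Jset (childJ o m) ⊆ Jset o := by
  match o with
  | none => simp [childJ, Jset]
  | some (a, b) =>
      intro x hx
      simp only [childJ, Jset] at hx ⊢
      rcases le_or_gt b a with hba | hab
      · have hd := pt_succ_sub a b m
        have : (b - a) / 2 ^ (m+1) ≤ 0 :=
          div_nonpos_of_nonpos_of_nonneg (by linarith) (by positivity)
        have := hx.1; have := hx.2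
        constructor <;> linarith
      · have h1 := ge_pt a b m (le_of_lt hab)
        have h2 := pt_lt_b hab (m+1)
        exact ⟨lt_of_le_of_lt h1 hx.1, lt_trans hx.2 h2⟩

def rootK : Set ℝ :=
  if h : ∃ q : ℚ, ∃ y ∈ P, |y - (q:ℝ)| < 2 then ballP P h.choose 2 else ∅

lemma kinv_rootK (hP : IsClosed P) (hPne : P.Nonempty) : KInv P (rootK P) := by
  have hex : ∃ q : ℚ, ∃ y ∈ P, |y - (q:ℝ)| < 2 := by
    obtain ⟨x, hx⟩ := hPne
    obtain ⟨q, hq⟩ := exists_rat_near x one_pos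
    exact ⟨q, x, hx, by linarith⟩
  rw [rootK, dif_pos hex]
  exact kinv_ballP P hP _ _ (by exact_mod_cast hex.choose_spec)

def node : List ℕ → Option (ℝ × ℝ) × Set ℝ
  | [] => (none, rootK P)
  | m :: t => (childJ (node t).1 m, childK P (node t).2 m)

lemma kinv_node (hP : IsClosed P) (hPne : P.Nonempty) :
    ∀ t : List ℕ, KInv P (node P t).2 := by
  intro t
  induction t with
  | nil => exact kinv_rootK P hP hPne
  | cons m u ih => exact kinv_childK P hP ih m

def JInv : ℕ → Option (ℝ × ℝ) → Prop
  | 0, o => o = none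
  | n+1, o => ∃ a b : ℝ, a < b ∧ b - a ≤ 2 / 2 ^ (n+1) ∧ o = some (a, b)

lemma jinv_child {n : ℕ} {o : Option (ℝ × ℝ)} (h : JInv n o) (m : ℕ) :
    JInv (n+1) (childJ o m) := by
  match n, o with
  | 0, o =>
      have : o = none := h
      subst this
      exact ⟨zint m, zint m + 1, by linarith, by norm_num, rfl⟩
  | n+1, o =>
      obtain ⟨a, b, hab, hlen, rfl⟩ := h
      refine ⟨pt a b m, pt a b (m+1), pt_lt_succ hab m, ?_, rfl⟩
      rw [pt_succ_sub]
      have h1 : (b - a) / 2 ^ (m+1) ≤ (b - a) / 2 := by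
        apply div_le_div_of_nonneg_left (by linarith) (by norm_num)
        exact le_self_pow₀ (by norm_num) (by omega)
      have h2 : (b - a) / 2 ≤ (2 / 2 ^ (n+1)) / 2 := by linarith
      have h3 : (2:ℝ) / 2 ^ (n+1) / 2 = 2 / 2 ^ (n+2) := by
        rw [div_div, ← pow_succ]
      linarith

lemma jinv_node : ∀ t : List ℕ, JInv t.length (node P t).1 := by
  intro t
  induction t with
  | nil => rfl
  | cons m u ih => exact jinv_child ih m

lemma jinv_cases {n : ℕ} {o : Option (ℝ × ℝ)} (h : JInv n o) :
    o = none ∨ ∃ a b : ℝ, a < b ∧ o = some (a, b) := by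
  match n with
  | 0 => exact Or.inl h
  | n+1 =>
      obtain ⟨a, b, hab, -, rfl⟩ := h
      exact Or.inr ⟨a, b, hab, rfl⟩

lemma node_J_disjoint : ∀ t t' : List ℕ, t.length = t'.length → t ≠ t' →
    Jset (node P t).1 ∩ Jset (node P t').1 = ∅ := by
  intro t
  induction t with
  | nil =>
      intro t' hlen hne
      cases t' with
      | nil => exact absurd rfl hne
      | cons m u => simp at hlen
  | cons m u ih =>
      intro t' hlen hne
      cases t' with
      | nil => simp at hlen
      | cons m' u' =>
          simp only [List.length_cons] at hlen
          by_cases hu : u = u'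
          · subst hu
            have hm : m ≠ m' := fun h => hne (by rw [h])
            exact childJ_disjoint (node P u).1 hm
          · apply eq_empty_iff_forall_notMem.2
            rintro x ⟨hx1, hx2⟩
            have h1 : x ∈ Jset (node P u).1 := childJ_subset _ _ hx1
            have h2 : x ∈ Jset (node P u').1 := childJ_subset _ _ hx2
            have := ih u' (by omega) hu
            exact absurd (Set.mem_inter h1 h2) (by rw [this]; exact notMem_empty x)

lemma childJ_dense {o : Option (ℝ × ℝ)}
    (ho : o = none ∨ ∃ a b : ℝ, a < b ∧ o = some (a, b)) :
    ∀ y ∈ Jset o, ∀ δ : ℝ, 0 < δ →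
      ∃ m z, z ∈ Jset (childJ o m) ∧ |z - y| < δ := by
  intro y hy δ hδ
  rcases ho with rfl | ⟨a, b, hab, rfl⟩
  · have hB : (Set.range (Int.cast : ℤ → ℝ)).Countable := countable_range _
    have hdense : Dense (Set.range (Int.cast : ℤ → ℝ))ᶜ := hB.dense_compl ℝ
    obtain ⟨z, hz1, hz2⟩ := hdense.inter_open_nonempty (Metric.ball y δ)
      Metric.isOpen_ball ⟨y, Metric.mem_ball_self hδ⟩
    obtain ⟨m, hm⟩ : ∃ m, (Denumerable.ofNat ℤ m : ℤ) = ⌊z⌋ :=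
      ⟨_, Denumerable.ofNat_encode _⟩
    refine ⟨m, z, ?_, by simpa [Real.dist_eq] using hz1⟩
    have hzfloor : z ≠ ((⌊z⌋ : ℤ) : ℝ) := fun h => hz2 ⟨⌊z⌋, h.symm⟩
    have h1 : ((⌊z⌋ : ℤ) : ℝ) < z := lt_of_le_of_ne (Int.floor_le z) (Ne.symm hzfloor)
    have h2 : z < ((⌊z⌋ : ℤ) : ℝ) + 1 := Int.lt_floor_add_one z
    simp only [childJ, Jset, zint, hm]
    exact ⟨h1, h2⟩
  · have hy' : y ∈ Set.Ioo a b := hy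
    have hB : (Set.range (pt a b)).Countable := countable_range _
    have hdense : Dense (Set.range (pt a b))ᶜ := hB.dense_compl ℝ
    have hU : IsOpen (Set.Ioo (max a (y - δ)) (min b (y + δ))) := isOpen_Ioo
    have hUne : (Set.Ioo (max a (y - δ)) (min b (y + δ))).Nonempty := by
      refine ⟨y, ?_, ?_⟩
      · exact max_lt hy'.1 (by linarith)
      · exact lt_min hy'.2 (by linarith)
    obtain ⟨z, hz1, hz2⟩ := hdense.inter_open_nonempty _ hU hUne
    have hza : a < z := lt_of_le_of_lt (le_max_left _ _) hz1.1
    have hzb : z < b := lt_of_lt_of_le hz1.2 (min_le_left _ _)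
    have hzy : |z - y| < δ := by
      have l1 : y - δ < z := lt_of_le_of_lt (le_max_right _ _) hz1.1
      have l2 : z < y + δ := lt_of_lt_of_le hz1.2 (min_le_right _ _)
      rw [abs_lt]; constructor <;> linarith
    have hex : ∃ n, z < pt a b n := pt_tendsto hab hzb
    have h0 : ¬ (z < pt a b 0) := by rw [pt_zero]; linarith
    have hm0pos : Nat.find hex ≠ 0 := fun h => h0 (by rw [← h]; exact Nat.find_spec hex)
    obtain ⟨m, hm⟩ : ∃ m, Nat.find hex = m + 1 := ⟨Nat.find hex - 1, by omega⟩
    have hlt : z < pt a b (m + 1) := hm ▸ Nat.find_spec hex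
    have hge : ¬ (z < pt a b m) := Nat.find_min hex (by omega)
    have hne : z ≠ pt a b m := fun h => hz2 ⟨m, h.symm⟩
    have : pt a b m < z := lt_of_le_of_ne (not_lt.1 hge) (Ne.symm hne)
    exact ⟨m, z, ⟨this, hlt⟩, hzy⟩

def levelU (n : ℕ) : Set ℝ := ⋃ t ∈ {t : List ℕ | t.length = n}, Jset (node P t).1

lemma Jset_isOpen (o : Option (ℝ × ℝ)) : IsOpen (Jset o) := by
  match o with
  | none => exact isOpen_univ
  | some (a, b) => exact isOpen_Ioo

lemma levelU_isOpen (n : ℕ) : IsOpen (levelU P n) :=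
  isOpen_biUnion fun t _ => Jset_isOpen _

lemma levelU_dense (n : ℕ) : Dense (levelU P n) := by
  induction n with
  | zero =>
      have : Set.univ ⊆ levelU P 0 := by
        intro x _
        exact Set.mem_biUnion (show ([] : List ℕ) ∈ {t : List ℕ | t.length = 0} from rfl)
          (by trivial)
      intro x
      exact subset_closure (this (Set.mem_univ x))
  | succ n ih =>
      rw [Metric.dense_iff]
      intro x r hr
      obtain ⟨y, hy1, hy2⟩ := Metric.dense_iff.1 ih x (r/2) (by linarith)
      obtain ⟨t, ht, hyt⟩ := by
        simpa only [levelU, Set.mem_iUnion, exists_prop] using hy2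
      obtain ⟨m, z, hz1, hz2⟩ :=
        childJ_dense (jinv_cases (ht ▸ jinv_node P t)) y hyt (r/2) (by linarith)
      have ht' : t.length = n := ht
      refine ⟨z, ?_, ?_⟩
      · rw [Metric.mem_ball, Real.dist_eq]
        have : |y - x| < r / 2 := by simpa [Real.dist_eq] using hy1
        calc |z - x| ≤ |z - y| + |y - x| := abs_sub_le _ _ _
        _ < r := by linarith
      · refine Set.mem_biUnion (show (m :: t) ∈ {t : List ℕ | t.length = n + 1} by
          simp [ht']) ?_
        show z ∈ Jset (node P (m :: t)).1
        exact hz1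

def Dset : Set ℝ := ⋂ n, levelU P n

lemma isMeagre_of_isNowhereDense {u : Set ℝ} (hu : IsNowhereDense u) : IsMeagre u := by
  rw [isMeagre_iff_countable_union_isNowhereDense]
  exact ⟨{closure u}, by simpa using hu.closure, countable_singleton _,
    by simpa using subset_closure⟩

lemma key (P : Set ℝ) (hP : IsClosed P) (hPne : P.Nonempty)
    (S : Set (Set ℝ)) (hScl : ∀ s ∈ S, IsClosed s)
    (hScov : ∀ x ∈ P, ∃ s ∈ S, x ∈ s)
    (hnwd : ∀ s ∈ S, ∀ O : Set ℝ, IsOpen O → (O ∩ P).Nonempty → ∃ x ∈ O ∩ P, x ∉ s) :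
    ∃ C : Set (Set ℝ), (∀ c ∈ C, IsMeagre c) ∧ #C ≤ ℵ₀ + #S ∧ ⋃₀ C = Set.univ := by
  -- the residual set `Dset`
  have hres : Dset P ∈ residual ℝ :=
    countable_iInter_mem.2 fun n =>
      residual_of_dense_open (levelU_isOpen P n) (levelU_dense P n)
  have hDdense : Dense (Dset P) := dense_of_mem_residual hres
  -- branches
  have hbranch : ∀ x ∈ Dset P, ∀ n : ℕ, ∃ t : List ℕ,
      t.length = n ∧ x ∈ Jset (node P t).1 := by
    intro x hx n
    have h1 : x ∈ levelU P n := Set.mem_iInter.1 hx n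
    obtain ⟨t, ht, hxt⟩ := by
      simpa only [levelU, Set.mem_iUnion, exists_prop] using h1
    exact ⟨t, ht, hxt⟩
  choose T hT1 hT2 using hbranch
  have huniq : ∀ (t t' : List ℕ), t.length = t'.length → ∀ x : ℝ,
      x ∈ Jset (node P t).1 → x ∈ Jset (node P t').1 → t = t' := by
    intro t t' hl x h1 h2
    by_contra hne
    have := node_J_disjoint P t t' hl hne
    exact absurd (Set.mem_inter h1 h2) (by rw [this]; exact Set.notMem_empty x)
  have hcoh : ∀ (x : ℝ) (hx : x ∈ Dset P) (n : ℕ),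
      ∃ m, T x hx (n+1) = m :: (T x hx n) := by
    intro x hx n
    rcases hlist : T x hx (n+1) with - | ⟨m, u⟩
    · have := hT1 x hx (n+1); rw [hlist] at this; simp at this
    · have hlen : u.length = n := by
        have := hT1 x hx (n+1); rw [hlist] at this; simpa using this
      have hxu : x ∈ Jset (node P u).1 := by
        have := hT2 x hx (n+1); rw [hlist] at this
        exact childJ_subset _ _ this
      have hu : u = T x hx n := huniq u (T x hx n) (by rw [hlen, hT1]) x hxu (hT2 x hx n)
      exact ⟨m, by rw [hu]⟩
  have hKne : ∀ t : List ℕ, ((node P t).2).Nonempty := by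
    intro t
    obtain ⟨-, -, O, -, hOP, hOK⟩ := kinv_node P hP hPne t
    exact hOP.mono hOK
  have hfex : ∀ (x : ℝ) (hx : x ∈ Dset P), ∃ y, ∀ n, y ∈ (node P (T x hx n)).2 := by
    intro x hx
    have hchain : ∀ n, (node P (T x hx (n+1))).2 ⊆ (node P (T x hx n)).2 := by
      intro n
      obtain ⟨m, hm⟩ := hcoh x hx n
      rw [hm]
      exact childK_subset P _ m
    have := IsCompact.nonempty_iInter_of_sequence_nonempty_isCompact_isClosed
      (fun n => (node P (T x hx n)).2) hchain (fun n => hKne _)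
      (kinv_node P hP hPne _).2.1
      (fun n => (kinv_node P hP hPne _).2.1.isClosed)
    obtain ⟨y, hy⟩ := this
    exact ⟨y, fun n => Set.mem_iInter.1 hy n⟩
  choose F hF using hfex
  have hFP : ∀ (x : ℝ) (hx : x ∈ Dset P), F x hx ∈ P := by
    intro x hx
    have h0 : T x hx 0 = [] := List.eq_nil_of_length_eq_zero (hT1 x hx 0)
    have := hF x hx 0
    rw [h0] at this
    exact (kinv_rootK P hP hPne).1 this
  -- the meager pieces
  refine ⟨insert (Dset P)ᶜ ((fun s => {x | ∃ hx : x ∈ Dset P, F x hx ∈ s}) '' S),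
    ?_, ?_, ?_⟩
  · rintro c (rfl | ⟨s, hs, rfl⟩)
    · rw [IsMeagre, compl_compl]; exact hres
    · apply isMeagre_of_isNowhereDense
      apply eq_empty_iff_forall_notMem.2
      intro x hxint
      obtain ⟨ε, hε, hball⟩ := Metric.mem_nhds_iff.1 (mem_interior_iff_mem_nhds.1 hxint)
      obtain ⟨y, hyb, hy⟩ := Metric.dense_iff.1 hDdense x (ε/2) (by linarith)
      -- find a small level
      obtain ⟨k, hk⟩ := exists_pow_lt_of_lt_one (show (0:ℝ) < ε/2 by linarith)
        (show (1:ℝ)/2 < 1 by norm_num)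
      have hk' : (2:ℝ) / 2 ^ (k+1) < ε / 2 := by
        have : ((1:ℝ)/2) ^ k = 2 / 2 ^ (k+1) := by
          rw [div_pow, one_pow, pow_succ]
          rw [div_eq_div_iff (by positivity) (by positivity)]
          ring
        linarith [this ▸ hk]
      set t := T y hy (k+1) with hts
      have hJI := jinv_node P t
      rw [hT1 y hy (k+1)] at hJI
      obtain ⟨a, b, hab, hlen, hsome⟩ := hJI
      have hyJ : y ∈ Set.Ioo a b := by
        have := hT2 y hy (k+1); rw [hsome] at this; exact this
      have hJball : Set.Ioo a b ⊆ Metric.ball x ε := by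
        intro w hw
        rw [Metric.mem_ball, Real.dist_eq]
        have hyx : |y - x| < ε/2 := by simpa [Real.dist_eq] using hyb
        have : |w - y| < b - a := by
          rw [abs_lt]; constructor
          · have := hw.1; have := hyJ.2; linarith
          · have := hw.2; have := hyJ.1; linarith
        calc |w - x| ≤ |w - y| + |y - x| := abs_sub_le _ _ _
        _ < (b - a) + ε/2 := by linarith
        _ ≤ 2/2^(k+1) + ε/2 := by linarith
        _ < ε := by linarith
      obtain ⟨m, hm⟩ := exists_good_childK P hP (kinv_node P hP hPne t)
        (hScl s hs) (hnwd s hs)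
      -- the child interval
      have hJI' := jinv_node P (m :: t)
      have hlen' : (m :: t).length = k + 2 := by
        simp [hts, hT1 y hy (k+1)]
      rw [hlen'] at hJI'
      obtain ⟨a', b', hab', -, hsome'⟩ := hJI'
      have hsub : Set.Ioo a' b' ⊆ Set.Ioo a b := by
        have h1 := childJ_subset (node P t).1 m
        have h2 : (node P (m :: t)).1 = childJ (node P t).1 m := rfl
        rw [← h2, hsome'] at h1
        rw [hsome] at h1
        exact h1
      -- a point of the child interval lies in closure, hence meets the set
      obtain ⟨w, hw⟩ := Set.nonempty_Ioo.2 hab'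
      have hwcl : w ∈ closure {x | ∃ hx : x ∈ Dset P, F x hx ∈ s} :=
        hball (hJball (hsub hw))
      obtain ⟨v, hvJ, hv⟩ := mem_closure_iff.1 hwcl (Set.Ioo a' b') isOpen_Ioo hw
      obtain ⟨hvD, hvF⟩ := hv
      -- identify the branch of `v` at level `k+2`
      have hveq : T v hvD (k+2) = m :: t := by
        apply huniq _ _ (by rw [hT1 v hvD (k+2), hlen']) v (hT2 v hvD (k+2))
        rw [hsome']
        exact hvJ
      have hvK : F v hvD ∈ childK P (node P t).2 m := by
        have := hF v hvD (k+2)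
        rw [hveq] at this
        exact this
      exact absurd (Set.mem_inter hvK hvF) (by rw [hm]; exact Set.notMem_empty _)
  · calc #((insert (Dset P)ᶜ ((fun s => {x | ∃ hx : x ∈ Dset P, F x hx ∈ s}) '' S) : Set (Set ℝ)))
        ≤ #((fun s => {x | ∃ hx : x ∈ Dset P, F x hx ∈ s}) '' S) + 1 :=
          Cardinal.mk_insert_le
    _ ≤ #S + 1 := by gcongr; exact Cardinal.mk_image_le
    _ ≤ #S + ℵ₀ := by gcongr; exact Cardinal.one_le_aleph0
    _ = ℵ₀ + #S := add_comm _ _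
  · apply Set.eq_univ_of_forall
    intro x
    by_cases hx : x ∈ Dset P
    · obtain ⟨s, hs, hFs⟩ := hScov (F x hx) (hFP x hx)
      exact ⟨{z | ∃ hz : z ∈ Dset P, F z hz ∈ s},
        Set.mem_insert_of_mem _ (Set.mem_image_of_mem _ hs), ⟨hx, hFs⟩⟩
    · exact ⟨(Dset P)ᶜ, Set.mem_insert _ _, hx⟩

end Stmt17
end StmtAux

open Stmt17 in
/-- If `H` is a cover of `ℝ` by closed sets and `#H` is less than the covering
number of the meager ideal (expressed by: no family of meager sets of
cardinality at most `#H` covers `ℝ`), then `H` has a countable subcover. -/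
theorem stmt_17 (H : Set (Set ℝ)) (hcl : ∀ s ∈ H, IsClosed s)
    (hcov : ⋃₀ H = Set.univ)
    (hsmall : ∀ C : Set (Set ℝ), (∀ s ∈ C, IsMeagre s) → #C ≤ #H →
      ⋃₀ C ≠ Set.univ) :
    ∃ H' ⊆ H, H'.Countable ∧ ⋃₀ H' = Set.univ := by
  classical
  by_cases hHc : H.Countable
  · exact ⟨H, subset_rfl, hHc, hcov⟩
  set G : Set (Set ℝ) :=
    {b | (∃ p q : ℚ, b = Set.Ioo (p:ℝ) (q:ℝ)) ∧ ∃ c, c ⊆ H ∧ c.Countable ∧ b ⊆ ⋃₀ c}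
    with hGdef
  have hGc : G.Countable := by
    have hsub : G ⊆ (fun pq : ℚ × ℚ => Set.Ioo ((pq.1 : ℝ)) ((pq.2 : ℝ))) '' Set.univ := by
      rintro b ⟨⟨p, q, rfl⟩, -⟩
      exact ⟨(p, q), trivial, rfl⟩
    exact Set.Countable.mono hsub (Set.countable_univ.image _)
  have hGopen : ∀ b ∈ G, IsOpen b := by
    rintro b ⟨⟨p, q, rfl⟩, -⟩
    exact isOpen_Ioo
  have hGcov : ∀ b : G, ∃ c, c ⊆ H ∧ c.Countable ∧ (b : Set ℝ) ⊆ ⋃₀ c := fun b => b.2.2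
  choose cfun hc1 hc2 hc3 using hGcov
  have : Countable G := hGc.to_subtype
  set H' : Set (Set ℝ) := ⋃ b : G, cfun b with hH'def
  have hH'sub : H' ⊆ H := Set.iUnion_subset fun b => hc1 b
  have hH'c : H'.Countable := Set.countable_iUnion fun b => hc2 b
  set W : Set ℝ := ⋃₀ G with hWdef
  have hWsub : W ⊆ ⋃₀ H' := by
    rintro x ⟨b, hb, hxb⟩
    obtain ⟨s, hs, hxs⟩ := hc3 ⟨b, hb⟩ hxb
    exact ⟨s, Set.mem_iUnion.2 ⟨⟨b, hb⟩, hs⟩, hxs⟩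
  by_cases hW : W = Set.univ
  · refine ⟨H', hH'sub, hH'c, subset_antisymm (Set.subset_univ _) ?_⟩
    rw [← hW]
    exact hWsub
  · set P : Set ℝ := Wᶜ with hPdef
    have hWopen : IsOpen W := isOpen_sUnion hGopen
    have hPclosed : IsClosed P := hWopen.isClosed_compl
    have hPne : P.Nonempty := Set.nonempty_compl.2 hW
    have hnwd : ∀ s ∈ H, ∀ O : Set ℝ, IsOpen O → (O ∩ P).Nonempty →
        ∃ x ∈ O ∩ P, x ∉ s := by
      intro s hs O hO hOP
      obtain ⟨x, hxO, hxP⟩ := hOP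
      by_contra hcon
      push_neg at hcon
      obtain ⟨ε, hε, hball⟩ := Metric.isOpen_iff.1 hO x hxO
      obtain ⟨p, hp1, hp2⟩ := exists_rat_btwn (show x - ε < x by linarith)
      obtain ⟨q, hq1, hq2⟩ := exists_rat_btwn (show x < x + ε by linarith)
      have hIsub : Set.Ioo (p:ℝ) (q:ℝ) ⊆ O := by
        intro y hy
        apply hball
        rw [Metric.mem_ball, Real.dist_eq, abs_lt]
        constructor
        · have := hy.1; linarith
        · have := hy.2; linarith
      have hbG : Set.Ioo (p:ℝ) (q:ℝ) ∈ G := by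
        refine ⟨⟨p, q, rfl⟩, insert s H', Set.insert_subset hs hH'sub,
          hH'c.insert s, ?_⟩
        intro y hy
        by_cases hyP : y ∈ P
        · exact ⟨s, Set.mem_insert _ _, hcon y ⟨hIsub hy, hyP⟩⟩
        · have hyW : y ∈ W := not_not.1 hyP
          obtain ⟨c, hcH', hyc⟩ := hWsub hyW
          exact ⟨c, Set.mem_insert_of_mem _ hcH', hyc⟩
      have hIW : Set.Ioo (p:ℝ) (q:ℝ) ⊆ W := fun y hy => ⟨_, hbG, hy⟩
      exact hxP (hIW ⟨hp2, hq1⟩)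
    have hPcov : ∀ x ∈ P, ∃ s ∈ H, x ∈ s := by
      intro x _
      have : x ∈ ⋃₀ H := by rw [hcov]; trivial
      exact this
    obtain ⟨C, hC1, hC2, hC3⟩ := Stmt17.key P hPclosed hPne H hcl hPcov hnwd
    have hinf : ℵ₀ ≤ #H := by
      by_contra hlt
      exact hHc (Set.countable_coe_iff.1 (Cardinal.mk_le_aleph0_iff.1 (not_le.1 hlt).le))
    have hcard : #C ≤ #H := by
      refine le_trans hC2 ?_
      rw [Cardinal.add_eq_right hinf hinf]
    exact absurd hC3 (hsmall C hC1 hcard)
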